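/- (Lemma 2(a) of the paper.) Let n ≥ 3 and let H(A,B) := (n − 1)(2 − n) det(A) ω²(A,B) be the reduced SGFT Lagrangian density. At any pair (A, B) with A invertible which is semi-symmetric (i.e. Γ^α_{μν} − Γ^α_{νμ} = δ^α_μ ω_ν − δ^α_ν ω_μ, where Γ^α_{μν} := Σ_i λ_i^α B_{iμν}), the partial derivative of H with respect to A_{iβ}, holding B fixed, equals (n − 2) det(A) [ 2(n − 2) (Σ_α λ_i^α ω_α) ω^β − (n − 3) λ_i^β ω² ]. -/

import Mathlib

open scoped BigOperators

section sapAux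
variable {n : ℕ} {X : Type*} [NormedAddCommGroup X] [NormedSpace ℝ X]

lemma sap_diffAt_det {M : X → Matrix (Fin n) (Fin n) ℝ} {x : X}
    (h : ∀ a b, DifferentiableAt ℝ (fun y => M y a b) x) :
    DifferentiableAt ℝ (fun y => (M y).det) x := by
  simp only [Matrix.det_apply']
  refine DifferentiableAt.fun_sum fun σ _ => DifferentiableAt.const_mul ?_ _
  exact (HasFDerivAt.finset_prod (fun a _ => (h (σ a) a).hasFDerivAt)).differentiableAt

lemma sap_diffAt_inv_entry {M : X → Matrix (Fin n) (Fin n) ℝ} {x : X}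
    (h : ∀ a b, DifferentiableAt ℝ (fun y => M y a b) x)
    (hu : IsUnit (M x).det) (a b : Fin n) :
    DifferentiableAt ℝ (fun y => (M y)⁻¹ a b) x := by
  have key : ∀ y, (M y)⁻¹ a b = ((M y).det)⁻¹ * (M y).adjugate a b := by
    intro y
    rw [Matrix.inv_def, Matrix.smul_apply, Ring.inverse_eq_inv, smul_eq_mul]
  simp only [key, Matrix.adjugate_apply]
  have hdet0 : (M x).det ≠ 0 := by simpa [isUnit_iff_ne_zero] using hu
  refine DifferentiableAt.mul ((sap_diffAt_det h).inv hdet0) (sap_diffAt_det ?_)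
  intro a' b'
  simp only [Matrix.updateRow_apply]
  by_cases h' : a' = b
  · simp [h']
  · simp [h', h a' b']

lemma sap_hasDerivAt_inv_entry {N : ℝ → Matrix (Fin n) (Fin n) ℝ}
    {N' : Matrix (Fin n) (Fin n) ℝ} {t₀ : ℝ}
    (h : ∀ a b, HasDerivAt (fun t => N t a b) (N' a b) t₀)
    (hu : IsUnit (N t₀).det) (a b : Fin n) :
    HasDerivAt (fun t => (N t)⁻¹ a b) (-(((N t₀)⁻¹ * N' * (N t₀)⁻¹) a b)) t₀ := by
  have hdiff : ∀ a b, DifferentiableAt ℝ (fun t => (N t)⁻¹ a b) t₀ :=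
    fun a b => sap_diffAt_inv_entry (fun a b => (h a b).differentiableAt) hu a b
  set d : Matrix (Fin n) (Fin n) ℝ := fun a b => deriv (fun t => (N t)⁻¹ a b) t₀ with hd
  have hdD : ∀ a b, HasDerivAt (fun t => (N t)⁻¹ a b) (d a b) t₀ :=
    fun a b => (hdiff a b).hasDerivAt
  have hdet0 : (N t₀).det ≠ 0 := by simpa [isUnit_iff_ne_zero] using hu
  have hcont : ContinuousAt (fun t => (N t).det) t₀ :=
    (sap_diffAt_det (fun a b => (h a b).differentiableAt)).continuousAt
  have hev : ∀ᶠ t in nhds t₀, (N t).det ≠ 0 := hcont.eventually_ne hdet0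
  have key : ∀ j, ∑ k, d a k * N t₀ k j = -(((N t₀)⁻¹ * N') a j) := by
    intro j
    have h1 : HasDerivAt (fun t => ∑ k, (N t)⁻¹ a k * N t k j)
        (∑ k, (d a k * N t₀ k j + (N t₀)⁻¹ a k * N' k j)) t₀ :=
      HasDerivAt.fun_sum fun k _ => (hdD a k).mul (h k j)
    have h2 : (fun t => ∑ k, (N t)⁻¹ a k * N t k j)
        =ᶠ[nhds t₀] fun _ => (1 : Matrix (Fin n) (Fin n) ℝ) a j := by
      filter_upwards [hev] with t ht
      have hmul : (N t)⁻¹ * N t = 1 := Matrix.nonsing_inv_mul _ (isUnit_iff_ne_zero.mpr ht)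
      calc ∑ k, (N t)⁻¹ a k * N t k j = ((N t)⁻¹ * N t) a j := (Matrix.mul_apply).symm
        _ = (1 : Matrix (Fin n) (Fin n) ℝ) a j := by rw [hmul]
    have h3 : HasDerivAt (fun t => ∑ k, (N t)⁻¹ a k * N t k j) 0 t₀ :=
      (hasDerivAt_const t₀ _).congr_of_eventuallyEq h2
    have h4 := h1.unique h3
    rw [Finset.sum_add_distrib] at h4
    have h5 : ∑ k, (N t₀)⁻¹ a k * N' k j = ((N t₀)⁻¹ * N') a j := (Matrix.mul_apply).symm
    linarith [h4, h5]
  have final : d a b = -(((N t₀)⁻¹ * N' * (N t₀)⁻¹) a b) := by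
    have step1 : ∑ j, (∑ k, d a k * N t₀ k j) * (N t₀)⁻¹ j b = d a b := by
      have swap : ∑ j, (∑ k, d a k * N t₀ k j) * (N t₀)⁻¹ j b
          = ∑ k, d a k * ∑ j, N t₀ k j * (N t₀)⁻¹ j b := by
        simp only [Finset.sum_mul, Finset.mul_sum, mul_assoc]
        rw [Finset.sum_comm]
      rw [swap]
      have hmul : N t₀ * (N t₀)⁻¹ = 1 := Matrix.mul_nonsing_inv _ hu
      have hone : ∀ k, ∑ j, N t₀ k j * (N t₀)⁻¹ j b = (1 : Matrix (Fin n) (Fin n) ℝ) k b := by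
        intro k; rw [← Matrix.mul_apply, hmul]
      simp only [hone, Matrix.one_apply]
      simp [Finset.sum_ite_eq]
    rw [← step1]
    simp only [key]
    rw [show (((N t₀)⁻¹ * N' * (N t₀)⁻¹) a b) = ∑ j, ((N t₀)⁻¹ * N') a j * (N t₀)⁻¹ j b from
      Matrix.mul_apply]
    simp [neg_mul]
  exact final ▸ hdD a b

lemma sap_contract1 (Li : Matrix (Fin n) (Fin n) ℝ) (i β α j : Fin n) :
    (Li * Matrix.of (fun a b => if a = i ∧ b = β then (1:ℝ) else 0) * Li) α j
      = Li α i * Li β j := by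
  simp only [Matrix.mul_apply, Matrix.of_apply]
  have inner : ∀ b', (∑ a', Li α a' * if a' = i ∧ b' = β then (1:ℝ) else 0)
      = if b' = β then Li α i else 0 := by
    intro b'
    by_cases hb : b' = β
    · simp [hb, mul_ite, Finset.sum_ite_eq']
    · simp [hb]
  simp only [inner, ite_mul, zero_mul, Finset.sum_ite_eq']
  simp

lemma sap_contract2 (Gi Li : Matrix (Fin n) (Fin n) ℝ) (A : Fin n → Fin n → ℝ) (i β μ ν : Fin n)
    (hu : ∀ μ, ∑ ρ, Gi μ ρ * A i ρ = Li μ i)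
    (hsym : ∀ μ ν, Gi μ ν = Gi ν μ) :
    (Gi * Matrix.of (fun a b => (if a = β then A i b else 0) + (if b = β then A i a else 0)) * Gi) μ ν
      = Gi μ β * Li ν i + Li μ i * Gi β ν := by
  simp only [Matrix.mul_apply, Matrix.of_apply]
  have inner : ∀ σ, (∑ ρ, Gi μ ρ * ((if ρ = β then A i σ else 0) + (if σ = β then A i ρ else 0)))
      = Gi μ β * A i σ + (if σ = β then Li μ i else 0) := by
    intro σ
    rw [Finset.sum_congr rfl (fun ρ _ => mul_add (Gi μ ρ) _ _), Finset.sum_add_distrib]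
    congr 1
    · simp [mul_ite, Finset.sum_ite_eq']
    · by_cases hσ : σ = β
      · simp [hσ, hu μ]
      · simp [hσ]
  simp only [inner, add_mul, Finset.sum_add_distrib]
  congr 1
  · calc ∑ σ, Gi μ β * A i σ * Gi σ ν
        = Gi μ β * ∑ σ, Gi ν σ * A i σ := by
          rw [Finset.mul_sum]
          exact Finset.sum_congr rfl fun σ _ => by rw [hsym σ ν]; ring
      _ = Gi μ β * Li ν i := by rw [hu ν]
  · simp [ite_mul, Finset.sum_ite_eq']

lemma sap_domega_sum (Li : Matrix (Fin n) (Fin n) ℝ) (B : Fin n → Fin n → Fin n → ℝ)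
    (ω : Fin n → ℝ) (i β μ : Fin n)
    (hG : ∀ α', ∑ j, Li β j * (B j μ α' - B j α' μ)
      = (if β = μ then ω α' else 0) - (if β = α' then ω μ else 0)) :
    ∑ j, ∑ α', (-(Li α' i * Li β j)) * (B j μ α' - B j α' μ)
      = -((if β = μ then (∑ α', Li α' i * ω α') else 0) - Li β i * ω μ) := by
  rw [Finset.sum_comm]
  have key : ∀ α', ∑ j, (-(Li α' i * Li β j)) * (B j μ α' - B j α' μ)
      = -(Li α' i * ((if β = μ then ω α' else 0) - (if β = α' then ω μ else 0))) := by
    intro α'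
    rw [← hG α', Finset.mul_sum, ← Finset.sum_neg_distrib]
    exact Finset.sum_congr rfl fun j _ => by ring
  rw [Finset.sum_congr rfl fun α' _ => key α', Finset.sum_neg_distrib]
  congr 1
  rw [Finset.sum_congr rfl (fun α' _ => mul_sub (Li α' i) _ _), Finset.sum_sub_distrib]
  congr 1
  · by_cases hβ : β = μ
    · simp [hβ]
    · simp [hβ]
  · simp [mul_ite, Finset.sum_ite_eq]

lemma sap_F1 (Gi Li : Matrix (Fin n) (Fin n) ℝ) (ω : Fin n → ℝ) (i β : Fin n) :
    ∑ μ, ∑ ν, (-(Gi μ β * Li ν i + Li μ i * Gi β ν)) * ω μ * ω ν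
      = -((∑ μ, Gi μ β * ω μ) * (∑ ν, Li ν i * ω ν)
          + (∑ μ, Li μ i * ω μ) * (∑ ν, Gi β ν * ω ν)) := by
  have prodform : ∀ (f g : Fin n → ℝ),
      (∑ μ, f μ) * (∑ ν, g ν) = ∑ μ, ∑ ν, f μ * g ν := fun f g =>
    Finset.sum_mul_sum _ _ _ _
  rw [prodform (fun μ => Gi μ β * ω μ) (fun ν => Li ν i * ω ν),
    prodform (fun μ => Li μ i * ω μ) (fun ν => Gi β ν * ω ν), ← Finset.sum_add_distrib]
  rw [← Finset.sum_neg_distrib]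
  refine Finset.sum_congr rfl fun μ _ => ?_
  rw [← Finset.sum_add_distrib, ← Finset.sum_neg_distrib]
  exact Finset.sum_congr rfl fun ν _ => by ring

lemma sap_F2 (Gi : Matrix (Fin n) (Fin n) ℝ) (ω : Fin n → ℝ) (β : Fin n) (c S lb : ℝ) :
    ∑ μ, ∑ ν, Gi μ ν * (-(c * ((if β = μ then S else 0) - lb * ω μ))) * ω ν
      = -(c * (S * (∑ ν, Gi β ν * ω ν) - lb * ∑ μ, ∑ ν, Gi μ ν * ω μ * ω ν)) := by
  have step1 : ∀ μ ∈ Finset.univ,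
      ∑ ν, Gi μ ν * (-(c * ((if β = μ then S else 0) - lb * ω μ))) * ω ν
      = (if β = μ then -(c * S * ∑ ν, Gi μ ν * ω ν) else 0)
        + c * lb * ∑ ν, Gi μ ν * ω μ * ω ν := by
    intro μ _
    by_cases hβ : β = μ
    · subst hβ
      simp only [eq_self_iff_true, if_true]
      rw [Finset.mul_sum, Finset.mul_sum, ← Finset.sum_neg_distrib,
        ← Finset.sum_add_distrib]
      exact Finset.sum_congr rfl fun ν _ => by ring
    · simp only [if_neg hβ, zero_add]
      rw [Finset.mul_sum]
      exact Finset.sum_congr rfl fun ν _ => by ring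
  rw [Finset.sum_congr rfl step1, Finset.sum_add_distrib, Finset.sum_ite_eq,
    ← Finset.mul_sum]
  simp only [Finset.mem_univ, if_pos]
  ring

lemma sap_F3 (Gi : Matrix (Fin n) (Fin n) ℝ) (ω : Fin n → ℝ) (β : Fin n) (c S lb : ℝ)
    (hsym : ∀ μ ν, Gi μ ν = Gi ν μ) :
    ∑ μ, ∑ ν, Gi μ ν * ω μ * (-(c * ((if β = ν then S else 0) - lb * ω ν)))
      = -(c * (S * (∑ ν, Gi β ν * ω ν) - lb * ∑ μ, ∑ ν, Gi μ ν * ω μ * ω ν)) := by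
  have swap : ∑ μ, ∑ ν, Gi μ ν * ω μ * (-(c * ((if β = ν then S else 0) - lb * ω ν)))
      = ∑ ν, ∑ μ, Gi ν μ * (-(c * ((if β = ν then S else 0) - lb * ω ν))) * ω μ := by
    rw [Finset.sum_comm]
    exact Finset.sum_congr rfl fun ν _ => Finset.sum_congr rfl fun μ _ => by
      rw [hsym μ ν]; ring
  rw [swap, sap_F2]

end sapAux

/-- The inverse-frame components λ_i^α of a frame matrix `A` (so that
Σ_i λ_i^α A_{iν} = δ^α_ν when `A` is invertible). -/
noncomputable def lamUp {n : ℕ} (A : Fin n → Fin n → ℝ) (i α : Fin n) : ℝ :=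
  (Matrix.of A)⁻¹ α i

/-- The metric g_{μν} = Σ_i A_{iμ} A_{iν} built from the frame matrix `A`. -/
noncomputable def gOf {n : ℕ} (A : Fin n → Fin n → ℝ) : Matrix (Fin n) (Fin n) ℝ :=
  Matrix.of fun μ ν => ∑ i, A i μ * A i ν

/-- ω_μ(A,B) = (1/(1−n)) Σ_{i,α} λ_i^α (B_{iμα} − B_{iαμ}), with the frame values `A`
and the frame-derivative values `B` treated as independent variables. -/
noncomputable def omegaOf {n : ℕ}
    (p : (Fin n → Fin n → ℝ) × (Fin n → Fin n → Fin n → ℝ)) (μ : Fin n) : ℝ :=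
  (1 / (1 - (n : ℝ))) * ∑ i, ∑ α, lamUp p.1 i α * (p.2 i μ α - p.2 i α μ)

/-- ω^β(A,B) = Σ_α g^{βα} ω_α. -/
noncomputable def omegaUpOf {n : ℕ}
    (p : (Fin n → Fin n → ℝ) × (Fin n → Fin n → Fin n → ℝ)) (β : Fin n) : ℝ :=
  ∑ α, (gOf p.1)⁻¹ β α * omegaOf p α

/-- ω²(A,B) = Σ_{μ,ν} g^{μν} ω_μ ω_ν. -/
noncomputable def omegaSqOf {n : ℕ}
    (p : (Fin n → Fin n → ℝ) × (Fin n → Fin n → Fin n → ℝ)) : ℝ :=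
  ∑ μ, ∑ ν, (gOf p.1)⁻¹ μ ν * omegaOf p μ * omegaOf p ν

/-- The connection values Γ^α_{μν}(A,B) = Σ_i λ_i^α B_{iμν}. -/
noncomputable def GammaOf {n : ℕ}
    (p : (Fin n → Fin n → ℝ) × (Fin n → Fin n → Fin n → ℝ)) (α μ ν : Fin n) : ℝ :=
  ∑ i, lamUp p.1 i α * p.2 i μ ν

/-- The reduced SGFT Lagrangian density H(A,B) = (n − 1)(2 − n) det(A) ω²(A,B). -/
noncomputable def HOf {n : ℕ}
    (p : (Fin n → Fin n → ℝ) × (Fin n → Fin n → Fin n → ℝ)) : ℝ :=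
  ((n : ℝ) - 1) * (2 - (n : ℝ)) * (Matrix.of p.1).det * omegaSqOf p

/-- (Lemma 2(a) of the paper.) At a semi-symmetric pair (A,B) with A invertible,
∂H/∂A_{iβ} = (n − 2) det(A) [ 2(n − 2)(Σ_α λ_i^α ω_α) ω^β − (n − 3) λ_i^β ω² ]. -/
theorem sap_lemma2a
    (n : ℕ) (hn : 3 ≤ n)
    (A : Fin n → Fin n → ℝ) (B : Fin n → Fin n → Fin n → ℝ)
    (hA : IsUnit (Matrix.of A).det)
    (hss : ∀ α μ ν, GammaOf (A, B) α μ ν - GammaOf (A, B) α ν μ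
      = (if α = μ then omegaOf (A, B) ν else 0) - (if α = ν then omegaOf (A, B) μ else 0))
    (i β : Fin n) :
    fderiv ℝ (fun p : (Fin n → Fin n → ℝ) × (Fin n → Fin n → Fin n → ℝ) => HOf p)
        (A, B) (fun i' β' => if i' = i ∧ β' = β then (1:ℝ) else 0, 0)
      = ((n : ℝ) - 2) * (Matrix.of A).det *
          (2 * ((n : ℝ) - 2) * (∑ α, lamUp A i α * omegaOf (A, B) α) * omegaUpOf (A, B) β
            - ((n : ℝ) - 3) * lamUp A i β * omegaSqOf (A, B)) := by
  classical
  have hdetne : (Matrix.of A).det ≠ 0 := by simpa [isUnit_iff_ne_zero] using hA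
  have hcast : (3:ℝ) ≤ (n:ℝ) := by exact_mod_cast hn
  have h1n : (1:ℝ) - (n:ℝ) ≠ 0 := by linarith
  -- metric facts
  have hGLL : gOf A = (Matrix.of A).transpose * Matrix.of A := by
    ext μ ν; simp [gOf, Matrix.mul_apply]
  have hGunit : IsUnit (gOf A).det := by
    rw [hGLL, Matrix.det_mul, Matrix.det_transpose]; exact hA.mul hA
  have hGiLT : (gOf A)⁻¹ * (Matrix.of A).transpose = (Matrix.of A)⁻¹ := by
    rw [hGLL, Matrix.mul_inv_rev, ← Matrix.transpose_nonsing_inv, Matrix.mul_assoc,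
      ← Matrix.transpose_mul, Matrix.mul_nonsing_inv _ hA, Matrix.transpose_one,
      Matrix.mul_one]
  have hsym : ∀ μ ν, (gOf A)⁻¹ μ ν = (gOf A)⁻¹ ν μ := by
    intro μ ν
    rw [hGLL, Matrix.mul_inv_rev, ← Matrix.transpose_nonsing_inv]
    simp only [Matrix.mul_apply, Matrix.transpose_apply]
    exact Finset.sum_congr rfl fun k _ => mul_comm _ _
  have hu : ∀ μ, ∑ ρ, (gOf A)⁻¹ μ ρ * A i ρ = (Matrix.of A)⁻¹ μ i := by
    intro μ
    calc ∑ ρ, (gOf A)⁻¹ μ ρ * A i ρ = ((gOf A)⁻¹ * (Matrix.of A).transpose) μ i := by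
          simp [Matrix.mul_apply]
      _ = (Matrix.of A)⁻¹ μ i := by rw [hGiLT]
  -- the direction and the path
  set e : Fin n → Fin n → ℝ := fun i' β' => if i' = i ∧ β' = β then (1:ℝ) else 0 with hedef
  set At : ℝ → Fin n → Fin n → ℝ := fun t a b => A a b + t * e a b with hAtdef
  have hAt0 : At 0 = A := by funext a b; simp [hAtdef]
  have hEnt : ∀ a b, HasDerivAt (fun t => At t a b) (e a b) 0 := by
    intro a b
    simpa [hAtdef] using (hasDerivAt_mul_const (e a b)).const_add (A a b)
  -- lamUp derivatives
  have hlamD : ∀ j α, HasDerivAt (fun t => lamUp (At t) j α)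
      (-((Matrix.of A)⁻¹ α i * (Matrix.of A)⁻¹ β j)) 0 := by
    intro j α
    have h0 := sap_hasDerivAt_inv_entry (N := fun t => Matrix.of (At t))
      (N' := Matrix.of e) (t₀ := 0) (fun a b => hEnt a b)
      (by simp only [hAt0]; exact hA) α j
    rw [hAt0] at h0
    rw [hedef] at h0
    rw [sap_contract1] at h0
    exact h0
  -- omega derivatives
  have hωD : ∀ μ, HasDerivAt (fun t => omegaOf (At t, B) μ)
      (-((1/(1-(n:ℝ))) * ((if β = μ then (∑ α, (Matrix.of A)⁻¹ α i * omegaOf (A,B) α) else 0)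
          - (Matrix.of A)⁻¹ β i * omegaOf (A,B) μ))) 0 := by
    intro μ
    have hraw : HasDerivAt (fun t => omegaOf (At t, B) μ)
        ((1/(1-(n:ℝ))) * ∑ j, ∑ α, (-((Matrix.of A)⁻¹ α i * (Matrix.of A)⁻¹ β j))
          * (B j μ α - B j α μ)) 0 := by
      simp only [omegaOf]
      exact (HasDerivAt.fun_sum fun j _ => HasDerivAt.fun_sum fun α _ =>
        (hlamD j α).mul_const _).const_mul _
    have hGa : ∀ α', ∑ j, (Matrix.of A)⁻¹ β j * (B j μ α' - B j α' μ)
        = (if β = μ then omegaOf (A,B) α' else 0) - (if β = α' then omegaOf (A,B) μ else 0) := by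
      intro α'
      have h1 := hss β μ α'
      simpa [GammaOf, lamUp, mul_sub, Finset.sum_sub_distrib] using h1
    have hval := sap_domega_sum (Matrix.of A)⁻¹ B (omegaOf (A,B)) i β μ hGa
    rw [hval] at hraw
    have : (1/(1-(n:ℝ))) * (-((if β = μ then (∑ α, (Matrix.of A)⁻¹ α i * omegaOf (A,B) α) else 0)
          - (Matrix.of A)⁻¹ β i * omegaOf (A,B) μ))
        = -((1/(1-(n:ℝ))) * ((if β = μ then (∑ α, (Matrix.of A)⁻¹ α i * omegaOf (A,B) α) else 0)
          - (Matrix.of A)⁻¹ β i * omegaOf (A,B) μ)) := by ring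
    rw [this] at hraw
    exact hraw
  -- metric entry derivatives
  have hgD : ∀ μ ν, HasDerivAt (fun t => gOf (At t) μ ν)
      ((if μ = β then A i ν else 0) + (if ν = β then A i μ else 0)) 0 := by
    intro μ ν
    have hraw : HasDerivAt (fun t => gOf (At t) μ ν)
        (∑ i', (e i' μ * A i' ν + A i' μ * e i' ν)) 0 := by
      simp only [gOf, Matrix.of_apply]
      refine HasDerivAt.fun_sum fun i' _ => ?_
      have := (hEnt i' μ).fun_mul (hEnt i' ν)
      simpa [hAt0] using this
    have hval : ∑ i', (e i' μ * A i' ν + A i' μ * e i' ν)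
        = (if μ = β then A i ν else 0) + (if ν = β then A i μ else 0) := by
      rw [hedef, Finset.sum_add_distrib]
      congr 1
      · by_cases hμ : μ = β
        · simp [hμ, ite_mul, Finset.sum_ite_eq']
        · simp [hμ]
      · by_cases hν : ν = β
        · simp [hν, mul_ite, Finset.sum_ite_eq']
        · simp [hν]
    rw [hval] at hraw
    exact hraw
  -- inverse metric derivatives
  have hGiD : ∀ μ ν, HasDerivAt (fun t => (gOf (At t))⁻¹ μ ν)
      (-((gOf A)⁻¹ μ β * (Matrix.of A)⁻¹ ν i + (Matrix.of A)⁻¹ μ i * (gOf A)⁻¹ β ν)) 0 := by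
    intro μ ν
    have h0 := sap_hasDerivAt_inv_entry (N := fun t => gOf (At t))
      (N' := Matrix.of (fun a b => (if a = β then A i b else 0) + (if b = β then A i a else 0)))
      (t₀ := 0) (fun a b => hgD a b) (by simp only [hAt0]; exact hGunit) μ ν
    rw [hAt0] at h0
    rw [sap_contract2 (gOf A)⁻¹ (Matrix.of A)⁻¹ A i β μ ν hu hsym] at h0
    exact h0
  -- determinant derivative
  have hdetD : HasDerivAt (fun t => (Matrix.of (At t)).det)
      ((Matrix.of A).det * (Matrix.of A)⁻¹ β i) 0 := by
    have hadj : (Matrix.of A).adjugate β i = (Matrix.of A).det * (Matrix.of A)⁻¹ β i := by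
      rw [Matrix.inv_def, Matrix.smul_apply, Ring.inverse_eq_inv, smul_eq_mul]
      field_simp
    have hfun : ∀ t, (Matrix.of (At t)).det
        = (Matrix.of A).det + t * ((Matrix.of A).det * (Matrix.of A)⁻¹ β i) := by
      intro t
      have hrow : Matrix.of (At t)
          = (Matrix.of A).updateRow i (A i + t • (Pi.single β 1 : Fin n → ℝ)) := by
        ext a b
        rw [hAtdef, hedef]
        by_cases ha : a = i
        · subst ha
          simp [Matrix.updateRow_apply, Pi.single_apply]
        · simp [Matrix.updateRow_apply, ha]
      rw [hrow, Matrix.det_updateRow_add, Matrix.det_updateRow_smul,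
        show (Matrix.of A).updateRow i (A i) = Matrix.of A from Matrix.updateRow_eq_self _ _,
        ← Matrix.adjugate_apply, hadj]
    have hlin : HasDerivAt (fun t : ℝ => (Matrix.of A).det
        + t * ((Matrix.of A).det * (Matrix.of A)⁻¹ β i))
        ((Matrix.of A).det * (Matrix.of A)⁻¹ β i) 0 := by
      simpa using (hasDerivAt_mul_const _).const_add ((Matrix.of A).det)
    exact hlin.congr_of_eventuallyEq (Filter.Eventually.of_forall hfun)
  -- omegaSq derivative
  have hω2D : HasDerivAt (fun t => omegaSqOf (At t, B))
      (∑ μ, ∑ ν, (((-((gOf A)⁻¹ μ β * (Matrix.of A)⁻¹ ν i + (Matrix.of A)⁻¹ μ i * (gOf A)⁻¹ β ν))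
            * omegaOf (A,B) μ
          + (gOf A)⁻¹ μ ν * (-((1/(1-(n:ℝ))) * ((if β = μ then (∑ α, (Matrix.of A)⁻¹ α i * omegaOf (A,B) α) else 0)
              - (Matrix.of A)⁻¹ β i * omegaOf (A,B) μ)))) * omegaOf (A,B) ν
        + (gOf A)⁻¹ μ ν * omegaOf (A,B) μ
            * (-((1/(1-(n:ℝ))) * ((if β = ν then (∑ α, (Matrix.of A)⁻¹ α i * omegaOf (A,B) α) else 0)
              - (Matrix.of A)⁻¹ β i * omegaOf (A,B) ν))))) 0 := by
    simp only [omegaSqOf]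
    refine HasDerivAt.fun_sum fun μ _ => HasDerivAt.fun_sum fun ν _ => ?_
    have := ((hGiD μ ν).fun_mul (hωD μ)).fun_mul (hωD ν)
    simpa [hAt0] using this
  -- simplify the omegaSq derivative value
  have hflip : ∑ μ, (gOf A)⁻¹ μ β * omegaOf (A,B) μ
      = ∑ ν, (gOf A)⁻¹ β ν * omegaOf (A,B) ν :=
    Finset.sum_congr rfl fun μ _ => by rw [hsym μ β]
  have hω2val : (∑ μ, ∑ ν, (((-((gOf A)⁻¹ μ β * (Matrix.of A)⁻¹ ν i + (Matrix.of A)⁻¹ μ i * (gOf A)⁻¹ β ν))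
            * omegaOf (A,B) μ
          + (gOf A)⁻¹ μ ν * (-((1/(1-(n:ℝ))) * ((if β = μ then (∑ α, (Matrix.of A)⁻¹ α i * omegaOf (A,B) α) else 0)
              - (Matrix.of A)⁻¹ β i * omegaOf (A,B) μ)))) * omegaOf (A,B) ν
        + (gOf A)⁻¹ μ ν * omegaOf (A,B) μ
            * (-((1/(1-(n:ℝ))) * ((if β = ν then (∑ α, (Matrix.of A)⁻¹ α i * omegaOf (A,B) α) else 0)
              - (Matrix.of A)⁻¹ β i * omegaOf (A,B) ν)))))
      = -((∑ ν, (gOf A)⁻¹ β ν * omegaOf (A,B) ν) * (∑ α, (Matrix.of A)⁻¹ α i * omegaOf (A,B) α)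
            + (∑ α, (Matrix.of A)⁻¹ α i * omegaOf (A,B) α) * (∑ ν, (gOf A)⁻¹ β ν * omegaOf (A,B) ν))
        + (-((1/(1-(n:ℝ))) * ((∑ α, (Matrix.of A)⁻¹ α i * omegaOf (A,B) α) * (∑ ν, (gOf A)⁻¹ β ν * omegaOf (A,B) ν)
              - (Matrix.of A)⁻¹ β i * ∑ μ, ∑ ν, (gOf A)⁻¹ μ ν * omegaOf (A,B) μ * omegaOf (A,B) ν)))
        + (-((1/(1-(n:ℝ))) * ((∑ α, (Matrix.of A)⁻¹ α i * omegaOf (A,B) α) * (∑ ν, (gOf A)⁻¹ β ν * omegaOf (A,B) ν)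
              - (Matrix.of A)⁻¹ β i * ∑ μ, ∑ ν, (gOf A)⁻¹ μ ν * omegaOf (A,B) μ * omegaOf (A,B) ν))) := by
    have split : (∑ μ, ∑ ν, (((-((gOf A)⁻¹ μ β * (Matrix.of A)⁻¹ ν i + (Matrix.of A)⁻¹ μ i * (gOf A)⁻¹ β ν))
            * omegaOf (A,B) μ
          + (gOf A)⁻¹ μ ν * (-((1/(1-(n:ℝ))) * ((if β = μ then (∑ α, (Matrix.of A)⁻¹ α i * omegaOf (A,B) α) else 0)
              - (Matrix.of A)⁻¹ β i * omegaOf (A,B) μ)))) * omegaOf (A,B) ν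
        + (gOf A)⁻¹ μ ν * omegaOf (A,B) μ
            * (-((1/(1-(n:ℝ))) * ((if β = ν then (∑ α, (Matrix.of A)⁻¹ α i * omegaOf (A,B) α) else 0)
              - (Matrix.of A)⁻¹ β i * omegaOf (A,B) ν)))))
        = (∑ μ, ∑ ν, (-((gOf A)⁻¹ μ β * (Matrix.of A)⁻¹ ν i + (Matrix.of A)⁻¹ μ i * (gOf A)⁻¹ β ν))
              * omegaOf (A,B) μ * omegaOf (A,B) ν)
          + (∑ μ, ∑ ν, (gOf A)⁻¹ μ ν * (-((1/(1-(n:ℝ))) * ((if β = μ then (∑ α, (Matrix.of A)⁻¹ α i * omegaOf (A,B) α) else 0)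
              - (Matrix.of A)⁻¹ β i * omegaOf (A,B) μ))) * omegaOf (A,B) ν)
          + (∑ μ, ∑ ν, (gOf A)⁻¹ μ ν * omegaOf (A,B) μ
              * (-((1/(1-(n:ℝ))) * ((if β = ν then (∑ α, (Matrix.of A)⁻¹ α i * omegaOf (A,B) α) else 0)
              - (Matrix.of A)⁻¹ β i * omegaOf (A,B) ν)))) := by
      rw [← Finset.sum_add_distrib, ← Finset.sum_add_distrib]
      refine Finset.sum_congr rfl fun μ _ => ?_
      rw [← Finset.sum_add_distrib, ← Finset.sum_add_distrib]
      exact Finset.sum_congr rfl fun ν _ => by ring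
    rw [split, sap_F1, hflip,
      sap_F2 (gOf A)⁻¹ (omegaOf (A,B)) β (1/(1-(n:ℝ)))
        (∑ α, (Matrix.of A)⁻¹ α i * omegaOf (A,B) α) ((Matrix.of A)⁻¹ β i),
      sap_F3 (gOf A)⁻¹ (omegaOf (A,B)) β (1/(1-(n:ℝ)))
        (∑ α, (Matrix.of A)⁻¹ α i * omegaOf (A,B) α) ((Matrix.of A)⁻¹ β i) hsym]
  -- derivative of H along the path
  have hHD : HasDerivAt (fun t => HOf (At t, B))
      ((((n:ℝ)-1) * (2-(n:ℝ)) * ((Matrix.of A).det * (Matrix.of A)⁻¹ β i)) * omegaSqOf (A,B)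
        + (((n:ℝ)-1) * (2-(n:ℝ)) * (Matrix.of A).det) *
          (-((∑ ν, (gOf A)⁻¹ β ν * omegaOf (A,B) ν) * (∑ α, (Matrix.of A)⁻¹ α i * omegaOf (A,B) α)
              + (∑ α, (Matrix.of A)⁻¹ α i * omegaOf (A,B) α) * (∑ ν, (gOf A)⁻¹ β ν * omegaOf (A,B) ν))
          + (-((1/(1-(n:ℝ))) * ((∑ α, (Matrix.of A)⁻¹ α i * omegaOf (A,B) α) * (∑ ν, (gOf A)⁻¹ β ν * omegaOf (A,B) ν)
                - (Matrix.of A)⁻¹ β i * ∑ μ, ∑ ν, (gOf A)⁻¹ μ ν * omegaOf (A,B) μ * omegaOf (A,B) ν)))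
          + (-((1/(1-(n:ℝ))) * ((∑ α, (Matrix.of A)⁻¹ α i * omegaOf (A,B) α) * (∑ ν, (gOf A)⁻¹ β ν * omegaOf (A,B) ν)
                - (Matrix.of A)⁻¹ β i * ∑ μ, ∑ ν, (gOf A)⁻¹ μ ν * omegaOf (A,B) μ * omegaOf (A,B) ν))))) 0 := by
    rw [← hω2val]
    simp only [HOf]
    have := (hdetD.const_mul (((n:ℝ)-1) * (2-(n:ℝ)))).fun_mul hω2D
    simpa [hAt0, mul_assoc] using this
  -- differentiability of H on the product space
  have dfst : ∀ (a b : Fin n), Differentiable ℝ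
      (fun p : (Fin n → Fin n → ℝ) × (Fin n → Fin n → Fin n → ℝ) => p.1 a b) := by
    intro a b
    exact (differentiable_pi.mp ((differentiable_pi.mp differentiable_fst) a)) b
  have dsnd : ∀ (j μ ν : Fin n), Differentiable ℝ
      (fun p : (Fin n → Fin n → ℝ) × (Fin n → Fin n → Fin n → ℝ) => p.2 j μ ν) := by
    intro j μ ν
    exact (differentiable_pi.mp ((differentiable_pi.mp
      ((differentiable_pi.mp differentiable_snd) j)) μ)) ν
  have dlam : ∀ j α, DifferentiableAt ℝ
      (fun p : (Fin n → Fin n → ℝ) × (Fin n → Fin n → Fin n → ℝ) => lamUp p.1 j α) (A, B) := by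
    intro j α
    exact sap_diffAt_inv_entry (M := fun p : (Fin n → Fin n → ℝ) × (Fin n → Fin n → Fin n → ℝ) => Matrix.of p.1)
      (fun a b => (dfst a b).differentiableAt) hA α j
  have dωp : ∀ μ, DifferentiableAt ℝ
      (fun p : (Fin n → Fin n → ℝ) × (Fin n → Fin n → Fin n → ℝ) => omegaOf p μ) (A, B) := by
    intro μ
    simp only [omegaOf]
    exact (DifferentiableAt.fun_sum fun j _ => DifferentiableAt.fun_sum fun α _ =>
      (dlam j α).mul (((dsnd j μ α).differentiableAt).sub
        ((dsnd j α μ).differentiableAt))).const_mul _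
  have dgp : ∀ (a b : Fin n), DifferentiableAt ℝ
      (fun p : (Fin n → Fin n → ℝ) × (Fin n → Fin n → Fin n → ℝ) => gOf p.1 a b) (A, B) := by
    intro a b
    simp only [gOf, Matrix.of_apply]
    exact DifferentiableAt.fun_sum fun k _ =>
      ((dfst k a).differentiableAt).mul ((dfst k b).differentiableAt)
  have dgi : ∀ μ ν, DifferentiableAt ℝ
      (fun p : (Fin n → Fin n → ℝ) × (Fin n → Fin n → Fin n → ℝ) => (gOf p.1)⁻¹ μ ν) (A, B) := by
    intro μ ν
    exact sap_diffAt_inv_entry (M := fun p : (Fin n → Fin n → ℝ) × (Fin n → Fin n → Fin n → ℝ) => gOf p.1) dgp hGunit μ ν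
  have dω2p : DifferentiableAt ℝ
      (fun p : (Fin n → Fin n → ℝ) × (Fin n → Fin n → Fin n → ℝ) => omegaSqOf p) (A, B) := by
    simp only [omegaSqOf]
    exact DifferentiableAt.fun_sum fun μ _ => DifferentiableAt.fun_sum fun ν _ =>
      ((dgi μ ν).mul (dωp μ)).mul (dωp ν)
  have hdiffH : DifferentiableAt ℝ
      (fun p : (Fin n → Fin n → ℝ) × (Fin n → Fin n → Fin n → ℝ) => HOf p) (A, B) := by
    simp only [HOf]
    exact ((sap_diffAt_det (fun a b => (dfst a b).differentiableAt)).const_mul _).mul dω2p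
  -- relate fderiv to the path derivative
  have hline : HasDerivAt (fun t : ℝ =>
      ((A, B) : (Fin n → Fin n → ℝ) × (Fin n → Fin n → Fin n → ℝ))
        + t • ((e, 0) : (Fin n → Fin n → ℝ) × (Fin n → Fin n → Fin n → ℝ)))
      ((e, 0) : (Fin n → Fin n → ℝ) × (Fin n → Fin n → Fin n → ℝ)) 0 := by
    simpa using ((hasDerivAt_id (0:ℝ)).smul_const
      (((e, 0)) : (Fin n → Fin n → ℝ) × (Fin n → Fin n → Fin n → ℝ))).const_add
      (((A, B)) : (Fin n → Fin n → ℝ) × (Fin n → Fin n → Fin n → ℝ))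
  have hcomp : HasDerivAt (fun t : ℝ => HOf
      (((A, B) : (Fin n → Fin n → ℝ) × (Fin n → Fin n → Fin n → ℝ))
        + t • ((e, 0) : (Fin n → Fin n → ℝ) × (Fin n → Fin n → Fin n → ℝ))))
      (fderiv ℝ (fun p : (Fin n → Fin n → ℝ) × (Fin n → Fin n → Fin n → ℝ) => HOf p)
        (A, B) ((e, 0) : (Fin n → Fin n → ℝ) × (Fin n → Fin n → Fin n → ℝ))) 0 := by
    have hFD' : HasFDerivAt (fun p : (Fin n → Fin n → ℝ) × (Fin n → Fin n → Fin n → ℝ) => HOf p)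
        (fderiv ℝ (fun p : (Fin n → Fin n → ℝ) × (Fin n → Fin n → Fin n → ℝ) => HOf p) (A, B))
        (((A, B) : (Fin n → Fin n → ℝ) × (Fin n → Fin n → Fin n → ℝ))
          + (0:ℝ) • ((e, 0) : (Fin n → Fin n → ℝ) × (Fin n → Fin n → Fin n → ℝ))) := by
      simpa using hdiffH.hasFDerivAt
    exact hFD'.comp_hasDerivAt 0 hline
  have hfun2 : (fun t : ℝ => HOf
      (((A, B) : (Fin n → Fin n → ℝ) × (Fin n → Fin n → Fin n → ℝ))
        + t • ((e, 0) : (Fin n → Fin n → ℝ) × (Fin n → Fin n → Fin n → ℝ))))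
      = fun t => HOf (At t, B) := by
    funext t
    congr 1
    have h1 : (A + t • e) = At t := by
      funext a b; simp [hAtdef]
    calc ((A, B) : (Fin n → Fin n → ℝ) × (Fin n → Fin n → Fin n → ℝ))
          + t • ((e, 0) : (Fin n → Fin n → ℝ) × (Fin n → Fin n → Fin n → ℝ))
        = (A + t • e, B + t • (0 : Fin n → Fin n → Fin n → ℝ)) := rfl
      _ = (At t, B) := by rw [h1]; simp
  rw [hfun2] at hcomp
  have hval := hcomp.unique hHD
  rw [hval]
  -- final scalar identity
  simp only [lamUp, omegaUpOf, omegaSqOf]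
  field_simp
  ring
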